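/- Let k be a field of characteristic 3, let ε₀, φ₀ ∈ k with ε₀ ≠ 0 and φ₀ ≠ 0, and let φ₁, φ₂, φ₃, γ₁, γ₂, γ₃, γ₄, γ₅ ∈ k. Set b₂ = ε₀t, b₄ = t(φ₃t³ + φ₂t² + φ₁t + φ₀), b₆ = t(γ₅t⁵ + γ₄t⁴ + γ₃t³ + γ₂t² + γ₁t), and Δ = −b₂²(b₂b₆ − b₄²) + b₄³. Then the coefficient of t⁴ in Δ equals ε₀²φ₀², which is nonzero; consequently, for all α, a, b ∈ k one has Δ ≠ α·t³(t−a)³(t−b)³, since every monomial of α·t³(t−a)³(t−b)³ has exponent divisible by 3. (This shows the configurations III X I₃ I₃ and III X I₆, with a type III fibre over t = 0 and X an additive fibre of type III or II over ∞, do not exist on a rational elliptic surface in characteristic 3.) -/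
import Mathlib

open Polynomial

theorem stmt13 {k : Type*} [Field k] [CharP k 3]
    (ε₀ : k) (hε₀ : ε₀ ≠ 0) (φ₀ : k) (hφ₀ : φ₀ ≠ 0)
    (φ₁ φ₂ φ₃ γ₁ γ₂ γ₃ γ₄ γ₅ : k)
    (b₂ b₄ b₆ Δ : k[X])
    (hb₂ : b₂ = C ε₀ * X)
    (hb₄ : b₄ = X * (C φ₃ * X ^ 3 + C φ₂ * X ^ 2 + C φ₁ * X + C φ₀))
    (hb₆ : b₆ = X * (C γ₅ * X ^ 5 + C γ₄ * X ^ 4 + C γ₃ * X ^ 3 + C γ₂ * X ^ 2 + C γ₁ * X))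
    (hΔ : Δ = -b₂ ^ 2 * (b₂ * b₆ - b₄ ^ 2) + b₄ ^ 3) :
    Δ.coeff 4 = ε₀ ^ 2 * φ₀ ^ 2 ∧ ε₀ ^ 2 * φ₀ ^ 2 ≠ 0 ∧
    (∀ (α a b : k) (n : ℕ), ¬ (3 ∣ n) →
      (C α * (X ^ 3 * (X - C a) ^ 3 * (X - C b) ^ 3)).coeff n = 0) ∧
    (∀ α a b : k, Δ ≠ C α * (X ^ 3 * (X - C a) ^ 3 * (X - C b) ^ 3)) := by
  have h3 : (3 : k) = 0 := by exact_mod_cast (CharP.cast_eq_zero k 3)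
  have hD : Δ =
      C (φ₀^3) * X^3 +
      C (ε₀^2*φ₀^2 + 3*φ₁*φ₀^2) * X^4 +
      C (2*ε₀^2*φ₁*φ₀ - ε₀^3*γ₁ + 3*φ₂*φ₀^2 + 3*φ₁^2*φ₀) * X^5 +
      C (2*ε₀^2*φ₂*φ₀ + ε₀^2*φ₁^2 - ε₀^3*γ₂ + 3*φ₃*φ₀^2 + 6*φ₂*φ₁*φ₀ + φ₁^3) * X^6 +
      C (2*ε₀^2*φ₃*φ₀ + 2*ε₀^2*φ₂*φ₁ - ε₀^3*γ₃ + 6*φ₃*φ₁*φ₀ + 3*φ₂*φ₁^2 + 3*φ₂^2*φ₀) * X^7 +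
      C (2*ε₀^2*φ₃*φ₁ + ε₀^2*φ₂^2 - ε₀^3*γ₄ + 6*φ₃*φ₂*φ₀ + 3*φ₃*φ₁^2 + 3*φ₂^2*φ₁) * X^8 +
      C (2*ε₀^2*φ₃*φ₂ - ε₀^3*γ₅ + 6*φ₃*φ₂*φ₁ + 3*φ₃^2*φ₀ + φ₂^3) * X^9 +
      C (ε₀^2*φ₃^2 + 3*φ₃*φ₂^2 + 3*φ₃^2*φ₁) * X^10 +
      C (3*φ₃^2*φ₂) * X^11 +
      C (φ₃^3) * X^12 := by
    subst hb₂ hb₄ hb₆ hΔ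
    simp only [C_add, C_sub, C_mul, C_pow, map_ofNat]
    ring
  have hc4 : Δ.coeff 4 = ε₀ ^ 2 * φ₀ ^ 2 := by
    rw [hD]
    simp only [coeff_add, coeff_C_mul, coeff_X_pow]
    rw [h3]; norm_num
  have hne : ε₀ ^ 2 * φ₀ ^ 2 ≠ 0 := mul_ne_zero (pow_ne_zero _ hε₀) (pow_ne_zero _ hφ₀)
  haveI : Fact (Nat.Prime 3) := ⟨by norm_num⟩
  have key : ∀ (α a b : k) (n : ℕ), ¬ (3 ∣ n) →
      (C α * (X ^ 3 * (X - C a) ^ 3 * (X - C b) ^ 3)).coeff n = 0 := by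
    intro α a b n hn
    have ha : (X - C a) ^ 3 = X ^ 3 - C (a ^ 3) := by
      rw [sub_pow_char, ← C_pow]
    have hb : (X - C b) ^ 3 = X ^ 3 - C (b ^ 3) := by
      rw [sub_pow_char, ← C_pow]
    have hEq : C α * (X ^ 3 * (X - C a) ^ 3 * (X - C b) ^ 3) =
        C α * X ^ 9 - C (α * (a ^ 3 + b ^ 3)) * X ^ 6 + C (α * (a ^ 3 * b ^ 3)) * X ^ 3 := by
      rw [ha, hb]
      simp only [C_add, C_mul]
      ring
    have h9 : n ≠ 9 := by rintro rfl; exact hn ⟨3, rfl⟩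
    have h6 : n ≠ 6 := by rintro rfl; exact hn ⟨2, rfl⟩
    have h3' : n ≠ 3 := by rintro rfl; exact hn ⟨1, rfl⟩
    rw [hEq]
    simp only [coeff_add, coeff_sub, coeff_C_mul, coeff_X_pow]
    simp [h9, h6, h3']
  refine ⟨hc4, hne, key, ?_⟩
  intro α a b heq
  have := key α a b 4 (by omega)
  rw [← heq, hc4] at this
  exact hne this
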